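/- Fix θ ∈ [0,1) and for ε > 0 define F_θ(ε) := (1/(2πε)) ∫_ℝ exp( −(1 − θ ε² (m² − 1)/2)² / (2ε²) − m²/2 ) dm, which is the value at y = 1 of the (continuous) probability density of the random variable ε N + θ ε² (M² − 1)/2, where N, M are independent standard normal random variables. Then there exists a constant c₀ > 0 such that ε · e^{1/(2ε²)} · F_θ(ε) → c₀ as ε ↓ 0; i.e. F_θ(ε) = ε^{−1} e^{−1/(2ε²)} (c₀ + o(1)). -/

import Mathlib

open MeasureTheory

/-- The density at `y = 1` of `εN + θε²(M²−1)/2` (N, M independent standard normals),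
written as a convolution integral. -/
noncomputable def Fdens (θ ε : ℝ) : ℝ :=
  (1 / (2 * Real.pi * ε)) *
    ∫ m : ℝ, Real.exp (-(1 - θ * ε ^ 2 * (m ^ 2 - 1) / 2) ^ 2 / (2 * ε ^ 2) - m ^ 2 / 2)

lemma aux_exponent (θ ε m : ℝ) (hε : ε ≠ 0) :
    1 / (2 * ε ^ 2) + (-(1 - θ * ε ^ 2 * (m ^ 2 - 1) / 2) ^ 2 / (2 * ε ^ 2) - m ^ 2 / 2)
      = θ * (m ^ 2 - 1) / 2 - ε ^ 2 * θ ^ 2 * (m ^ 2 - 1) ^ 2 / 8 - m ^ 2 / 2 := by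
  field_simp
  ring

lemma aux_bound_integrable (θ : ℝ) (hθ1 : θ < 1) :
    Integrable (fun m : ℝ => Real.exp (θ * (m ^ 2 - 1) / 2 - m ^ 2 / 2)) := by
  have h : (fun m : ℝ => Real.exp (θ * (m ^ 2 - 1) / 2 - m ^ 2 / 2))
      = fun m : ℝ => Real.exp (-θ / 2) * Real.exp (-((1 - θ) / 2) * m ^ 2) := by
    funext m
    rw [← Real.exp_add]
    ring_nf
  rw [h]
  exact (integrable_exp_neg_mul_sq (by linarith)).const_mul _

/-- For `θ ∈ [0,1)` one has `F_θ(ε) = ε⁻¹ e^{−1/(2ε²)} (c₀ + o(1))` as `ε ↓ 0`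
for some constant `c₀ > 0`. -/
theorem stmt_10 (θ : ℝ) (hθ0 : 0 ≤ θ) (hθ1 : θ < 1) :
    ∃ c₀ : ℝ, 0 < c₀ ∧
      Filter.Tendsto (fun ε : ℝ => ε * Real.exp (1 / (2 * ε ^ 2)) * Fdens θ ε)
        (nhdsWithin 0 (Set.Ioi 0)) (nhds c₀) := by
  set g : ℝ → ℝ := fun m => Real.exp (θ * (m ^ 2 - 1) / 2 - m ^ 2 / 2) with hg
  set F : ℝ → ℝ → ℝ := fun ε m =>
    Real.exp (θ * (m ^ 2 - 1) / 2 - ε ^ 2 * θ ^ 2 * (m ^ 2 - 1) ^ 2 / 8 - m ^ 2 / 2) with hF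
  refine ⟨(1 / (2 * Real.pi)) * ∫ m : ℝ, g m, ?_, ?_⟩
  · -- positivity of the limit, via the Gaussian integral
    have h : (fun m : ℝ => g m)
        = fun m : ℝ => Real.exp (-θ / 2) * Real.exp (-((1 - θ) / 2) * m ^ 2) := by
      funext m; rw [hg, ← Real.exp_add]; ring_nf
    have hI : ∫ m : ℝ, g m
        = Real.exp (-θ / 2) * Real.sqrt (Real.pi / ((1 - θ) / 2)) := by
      rw [h, integral_const_mul, integral_gaussian]
    rw [hI]
    have hπ := Real.pi_pos
    have h1 : (0:ℝ) < (1 - θ) / 2 := by linarith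
    have := Real.sqrt_pos.mpr (div_pos hπ h1)
    positivity
  · -- main convergence
    have key : Filter.Tendsto (fun ε : ℝ => ∫ m : ℝ, F ε m)
        (nhdsWithin 0 (Set.Ioi 0)) (nhds (∫ m : ℝ, g m)) := by
      apply tendsto_integral_filter_of_dominated_convergence g
      · filter_upwards with ε
        apply Continuous.aestronglyMeasurable
        continuity
      · filter_upwards with ε
        filter_upwards with m
        rw [hF]
        simp only [Real.norm_eq_abs, abs_of_pos (Real.exp_pos _)]
        apply Real.exp_le_exp.mpr
        have : 0 ≤ ε ^ 2 * θ ^ 2 * (m ^ 2 - 1) ^ 2 / 8 := by positivity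
        linarith
      · exact aux_bound_integrable θ hθ1
      · filter_upwards with m
        have hc : Continuous fun ε : ℝ =>
            Real.exp (θ * (m ^ 2 - 1) / 2 - ε ^ 2 * θ ^ 2 * (m ^ 2 - 1) ^ 2 / 8 - m ^ 2 / 2) := by
          continuity
        have := hc.tendsto 0
        simp only [ne_eq, OfNat.ofNat_ne_zero, not_false_eq_true, zero_pow, zero_mul,
          zero_div, sub_zero] at this
        exact (this.mono_left nhdsWithin_le_nhds)
    have heq : ∀ᶠ ε in nhdsWithin (0:ℝ) (Set.Ioi 0),
        ε * Real.exp (1 / (2 * ε ^ 2)) * Fdens θ ε = (1 / (2 * Real.pi)) * ∫ m : ℝ, F ε m := by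
      filter_upwards [self_mem_nhdsWithin] with ε (hε : ε ∈ Set.Ioi 0)
      have hε0 : ε ≠ 0 := ne_of_gt hε
      rw [Fdens]
      rw [show ε * Real.exp (1 / (2 * ε ^ 2)) * ((1 / (2 * Real.pi * ε)) *
          ∫ m : ℝ, Real.exp (-(1 - θ * ε ^ 2 * (m ^ 2 - 1) / 2) ^ 2 / (2 * ε ^ 2) - m ^ 2 / 2))
        = (1 / (2 * Real.pi)) * (Real.exp (1 / (2 * ε ^ 2)) *
          ∫ m : ℝ, Real.exp (-(1 - θ * ε ^ 2 * (m ^ 2 - 1) / 2) ^ 2 / (2 * ε ^ 2) - m ^ 2 / 2))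
        from by field_simp]
      congr 1
      rw [← integral_const_mul]
      congr 1
      funext m
      rw [← Real.exp_add, aux_exponent θ ε m hε0]
    exact (Filter.Tendsto.const_mul _ key).congr' (heq.mono fun ε h => h.symm)
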